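/- More precisely: the k-th term of the p-Zassenhaus filtration of U_{n+1}(F_p) is contained in the subgroup U_{n,k} of unipotent matrices 1 + a with a_{ij} = 0 whenever j - i ≤ k - 1. -/

import Mathlib

/-- The subgroup generated by `p`-th powers of elements of `H`. -/
def Subgroup.pPow {G : Type*} [Group G] (H : Subgroup G) (p : ℕ) : Subgroup G :=
  Subgroup.closure {x : G | ∃ h ∈ H, x = h ^ p}

/-- The `p`-Zassenhaus filtration of a group `G`: `zassenhaus p hp G m` is `G_{(m)}`
(with the convention that the value at `0` is `⊤`). -/
def zassenhaus (p : ℕ) (hp : 2 ≤ p) (G : Type*) [Group G] : ℕ → Subgroup G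
  | 0 => ⊤
  | 1 => ⊤
  | (m + 2) =>
      (zassenhaus p hp G ((m + 1) / p + 1)).pPow p ⊔
        ⨆ i : Fin (m + 1),
          ⁅zassenhaus p hp G ((i : ℕ) + 1), zassenhaus p hp G (m + 1 - (i : ℕ))⁆
  decreasing_by
  · exact Nat.succ_lt_succ (Nat.div_lt_self (by omega) (by omega))
  · have := i.isLt; omega
  · have := i.isLt; omega


namespace ZassPaper

abbrev Mat (p n : ℕ) := Matrix (Fin (n + 1)) (Fin (n + 1)) (ZMod p)

/-- `memV p n d a` : the strictly upper triangular matrix `a` has all entries vanishing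
at superdiagonal distance `< d`, i.e. `a i j = 0` whenever `j - i ≤ d - 1`. -/
def memV (p n d : ℕ) (a : Mat p n) : Prop :=
  ∀ i j : Fin (n + 1), (j : ℕ) < (i : ℕ) + d → a i j = 0

lemma memV_mono (p n : ℕ) {d e : ℕ} (h : e ≤ d) {a : Mat p n} (ha : memV p n d a) :
    memV p n e a := fun i j hij => ha i j (by omega)

lemma memV_zero (p n d : ℕ) : memV p n d 0 := fun _ _ _ => rfl

lemma memV_add (p n : ℕ) {d : ℕ} {a b : Mat p n} (ha : memV p n d a) (hb : memV p n d b) :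
    memV p n d (a + b) := by
  intro i j h
  simp [Matrix.add_apply, ha i j h, hb i j h]

lemma memV_mul (p n : ℕ) {d e : ℕ} {a b : Mat p n} (ha : memV p n d a) (hb : memV p n e b) :
    memV p n (d + e) (a * b) := by
  intro i j h
  rw [Matrix.mul_apply]
  apply Finset.sum_eq_zero
  intro k _
  by_cases hk : (k : ℕ) < (i : ℕ) + d
  · rw [ha i k hk, zero_mul]
  · rw [hb k j (by omega), mul_zero]

variable (p n : ℕ) [Fact p.Prime]

def UTset : Set (GL (Fin (n + 1)) (ZMod p)) :=
  {A | ∃ a : Mat p n, memV p n 1 a ∧ (A : Mat p n) = 1 + a}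

lemma UTset_one : (1 : GL (Fin (n + 1)) (ZMod p)) ∈ UTset p n :=
  ⟨0, memV_zero p n 1, by simp⟩

lemma UTset_mul {A B : GL (Fin (n + 1)) (ZMod p)} (hA : A ∈ UTset p n) (hB : B ∈ UTset p n) :
    A * B ∈ UTset p n := by
  obtain ⟨a, ha, hA⟩ := hA
  obtain ⟨b, hb, hB⟩ := hB
  refine ⟨a + b + a * b, ?_, ?_⟩
  · exact memV_add p n (memV_add p n ha hb)
      (memV_mono p n (by omega) (memV_mul p n ha hb))
  · show ((A * B : GL (Fin (n + 1)) (ZMod p)) : Mat p n) = _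
    rw [Units.val_mul, hA, hB]
    noncomm_ring

lemma UTset_pow {A : GL (Fin (n + 1)) (ZMod p)} (hA : A ∈ UTset p n) (k : ℕ) :
    A ^ k ∈ UTset p n := by
  induction k with
  | zero => simpa using UTset_one p n
  | succ k ih => rw [pow_succ]; exact UTset_mul p n ih hA

lemma UTset_inv {A : GL (Fin (n + 1)) (ZMod p)} (hA : A ∈ UTset p n) :
    A⁻¹ ∈ UTset p n := by
  have h1 : A ^ Fintype.card (GL (Fin (n + 1)) (ZMod p)) = 1 := pow_card_eq_one
  have hc : 0 < Fintype.card (GL (Fin (n + 1)) (ZMod p)) := Fintype.card_pos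
  have : A⁻¹ = A ^ (Fintype.card (GL (Fin (n + 1)) (ZMod p)) - 1) := by
    have : A * A ^ (Fintype.card (GL (Fin (n + 1)) (ZMod p)) - 1) = 1 := by
      rw [← pow_succ', Nat.sub_add_cancel hc]
      exact h1
    exact ((inv_eq_of_mul_eq_one_right this).symm).symm
  rw [this]
  exact UTset_pow p n hA _

/-- The group of upper triangular unipotent `(n+1)×(n+1)` matrices over `F_p`,
as a subgroup of `GL (Fin (n+1)) (ZMod p)`. -/
def UT : Subgroup (GL (Fin (n + 1)) (ZMod p)) where
  carrier := UTset p n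
  one_mem' := UTset_one p n
  mul_mem' := UTset_mul p n
  inv_mem' := UTset_inv p n


lemma memV_neg (p n : ℕ) {d : ℕ} {a : Mat p n} (ha : memV p n d a) : memV p n d (-a) := by
  intro i j h; simp [Matrix.neg_apply, ha i j h]

lemma memV_sub (p n : ℕ) {d : ℕ} {a b : Mat p n} (ha : memV p n d a) (hb : memV p n d b) :
    memV p n d (a - b) := by
  rw [sub_eq_add_neg]; exact memV_add p n ha (memV_neg p n hb)

lemma memV_one (p n : ℕ) : memV p n 0 (1 : Mat p n) := by
  intro i j h
  exact Matrix.one_apply_ne (by intro he; omega)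

lemma memV_pow (p n : ℕ) {d : ℕ} {a : Mat p n} (ha : memV p n d a) (k : ℕ) :
    memV p n (d * k) (a ^ k) := by
  induction k with
  | zero => simpa using memV_one p n
  | succ k ih =>
      rw [pow_succ, Nat.mul_succ]
      exact memV_mul p n ih ha

lemma memV_of_inv (p n : ℕ) {k : ℕ} {a b : Mat p n} (ha : memV p n k a) (hb : memV p n 1 b)
    (h : (1 + a) * (1 + b) = 1) : memV p n k b := by
  have h3 : a + b + a * b = 0 := by
    have h2 : (1 + a) * (1 + b) = 1 + (a + b + a * b) := by noncomm_ring
    rw [h2] at h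
    simpa using h
  have hb' : b = -(a + a * b) := by
    have h4 : b + (a + a * b) = 0 := by rw [← h3]; abel
    exact eq_neg_of_add_eq_zero_left h4
  have key : ∀ m, m ≤ k → memV p n m b := by
    intro m
    induction m with
    | zero => exact fun _ => memV_mono p n (by omega) hb
    | succ m ih =>
        intro hm
        have hbm : memV p n m b := ih (by omega)
        rw [hb']
        apply memV_neg
        apply memV_add
        · exact memV_mono p n hm ha
        · exact memV_mono p n (by omega) (memV_mul p n ha hbm)
  exact key k le_rfl

/-- matrix of an element of `UT p n`. -/
def M (p n : ℕ) [Fact p.Prime] (g : UT p n) : Mat p n := ((g : GL (Fin (n + 1)) (ZMod p)) : Mat p n)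

lemma M_mul (g h : UT p n) : M p n (g * h) = M p n g * M p n h := rfl

lemma M_one : M p n (1 : UT p n) = 1 := rfl

lemma M_mul_inv (g : UT p n) : M p n g * M p n g⁻¹ = 1 := by
  have : (g : GL (Fin (n + 1)) (ZMod p)) * ((g⁻¹ : UT p n) : GL (Fin (n + 1)) (ZMod p)) = 1 := by
    norm_cast; simp
  calc M p n g * M p n g⁻¹ = (((g : GL (Fin (n + 1)) (ZMod p)) *
      ((g⁻¹ : UT p n) : GL (Fin (n + 1)) (ZMod p)) : GL (Fin (n + 1)) (ZMod p)) : Mat p n) := rfl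
    _ = 1 := by rw [this]; rfl

lemma mem_UT (g : UT p n) : ∃ a : Mat p n, memV p n 1 a ∧ M p n g = 1 + a := g.2

/-- The subgroup of `UT p n` consisting of `1 + a` with `a` vanishing at
superdiagonal distance `< k`. -/
def Vgrp (k : ℕ) : Subgroup (UT p n) where
  carrier := {g | ∃ a : Mat p n, memV p n k a ∧ M p n g = 1 + a}
  one_mem' := ⟨0, memV_zero p n k, by simp [M_one]⟩
  mul_mem' := by
    rintro g h ⟨a, ha, hga⟩ ⟨b, hb, hhb⟩
    refine ⟨a + b + a * b, ?_, ?_⟩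
    · exact memV_add p n (memV_add p n ha hb)
        (memV_mono p n (by omega) (memV_mul p n ha hb))
    · rw [M_mul, hga, hhb]; noncomm_ring
  inv_mem' := by
    rintro g ⟨a, ha, hga⟩
    obtain ⟨b, hb, hgb⟩ := mem_UT p n g⁻¹
    refine ⟨b, ?_, hgb⟩
    apply memV_of_inv p n ha hb
    rw [← hga, ← hgb]
    exact M_mul_inv p n g

open scoped commutatorElement

lemma Vgrp_comm {d e : ℕ} {g h : UT p n}
    (hg : g ∈ Vgrp p n d) (hh : h ∈ Vgrp p n e) : ⁅g, h⁆ ∈ Vgrp p n (d + e) := by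
  obtain ⟨a, ha, hga⟩ := hg
  obtain ⟨b, hb, hhb⟩ := hh
  obtain ⟨z, hz, hwz⟩ := mem_UT p n (h * g)⁻¹
  have hcomm : ⁅g, h⁆ = (g * h) * (h * g)⁻¹ := by
    rw [commutatorElement_def, mul_inv_rev]; group
  have hM : M p n ⁅g, h⁆ = M p n (g * h) * M p n (h * g)⁻¹ := by rw [hcomm, M_mul]
  set w := M p n (h * g)⁻¹ with hw
  have hvw : M p n (h * g) * w = 1 := M_mul_inv p n (h * g)
  refine ⟨(a * b - b * a) * w, ?_, ?_⟩
  · have h1 : memV p n (d + e) (a * b - b * a) :=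
      memV_sub p n (memV_mul p n ha hb) (by rw [Nat.add_comm d e]; exact memV_mul p n hb ha)
    have h2 : memV p n 0 w := by
      rw [hwz]
      exact memV_add p n (memV_one p n) (memV_mono p n (by omega) hz)
    have := memV_mul p n h1 h2
    simpa using this
  · rw [hM]
    have huv : M p n (g * h) = M p n (h * g) + (a * b - b * a) := by
      rw [M_mul, M_mul, hga, hhb]
      noncomm_ring
    rw [huv, add_mul, hvw]

lemma M_pow (g : UT p n) (k : ℕ) : M p n (g ^ k) = (M p n g) ^ k := by
  induction k with
  | zero => exact M_one p n
  | succ q ih => rw [pow_succ, pow_succ, M_mul, ih]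

lemma Vgrp_pow {d : ℕ} {g : UT p n} (hg : g ∈ Vgrp p n d) :
    g ^ p ∈ Vgrp p n (p * d) := by
  obtain ⟨a, ha, hga⟩ := hg
  refine ⟨a ^ p, by rw [Nat.mul_comm]; exact memV_pow p n ha p, ?_⟩
  rw [M_pow p n g p, hga, add_pow_char_of_commute _ (Commute.one_left a), one_pow]

lemma zass_le : ∀ k : ℕ, 1 ≤ k →
    zassenhaus p (Fact.out : p.Prime).two_le (UT p n) k ≤ Vgrp p n k := by
  intro k
  induction k using Nat.strong_induction_on with
  | _ k IH =>
    intro hk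
    rcases k with _ | _ | m
    · omega
    · intro g _
      obtain ⟨a, ha, hga⟩ := mem_UT p n g
      exact ⟨a, ha, hga⟩
    · rw [zassenhaus]
      apply sup_le
      · rw [Subgroup.pPow, Subgroup.closure_le]
        rintro x ⟨h, hh, rfl⟩
        have hlt : (m + 1) / p + 1 < m + 2 :=
          Nat.succ_lt_succ (Nat.div_lt_self (by omega) (Fact.out : p.Prime).one_lt)
        have hmem := IH _ hlt (Nat.succ_le_succ (Nat.zero_le _)) hh
        have := Vgrp_pow p n hmem
        have hple : m + 2 ≤ p * ((m + 1) / p + 1) := by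
          have h1 := Nat.div_add_mod (m + 1) p
          have h2 : (m + 1) % p < p := Nat.mod_lt _
            (by have := (Fact.out : p.Prime).two_le; omega)
          rw [Nat.mul_add, Nat.mul_one]
          set t := p * ((m + 1) / p) with ht
          set s := (m + 1) % p with hs
          omega
        obtain ⟨a, ha, hga⟩ := this
        exact ⟨a, memV_mono p n hple ha, hga⟩
      · apply iSup_le
        intro i
        rw [Subgroup.commutator_le]
        intro g hg h hh
        have hi := i.isLt
        have h1 := IH ((i : ℕ) + 1) (by omega) (by omega) hg
        have h2 := IH (m + 1 - (i : ℕ)) (by omega) (by omega) hh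
        have := Vgrp_comm p n h1 h2
        have heq : (i : ℕ) + 1 + (m + 1 - (i : ℕ)) = m + 2 := by omega
        rwa [heq] at this

/-- The `k`-th term of the `p`-Zassenhaus filtration of `U_{n+1}(F_p)` is contained
in `U_{n,k} = {1 + a : a ∈ V_k}`. -/
theorem stmt6 (p n k : ℕ) [Fact p.Prime] (hn : 1 ≤ n) (hk : 1 ≤ k) :
    ∀ g : UT p n, g ∈ zassenhaus p (Fact.out : p.Prime).two_le (UT p n) k →
      ∃ a : Mat p n, memV p n k a ∧ ((g : GL (Fin (n + 1)) (ZMod p)) : Mat p n) = 1 + a := by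
  intro g hg
  exact zass_le p n k hk hg

end ZassPaper
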